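/- arXiv:2008.07099 — 4 statements merged into one kernel-verified Lean document; each statement's English description precedes it below -/
import Mathlib

section
/- Let M be a Q_p-Banach space with unit ball M^o, equipped with a continuous action of Z_p by isometries via an operator γ (the action of a topological generator). Suppose (γ-1)^m(M^o) ⊆ p·M^o for some m ≥ 0. Then the operator log(γ) = Σ_{m≥0} (-1)^m (γ-1)^{m+1}/(m+1) converges on M and its image satisfies log(γ)(M) ⊆ (γ-1)(M). -/
open Filter

/-- Let `M` be a `ℚ_p`-Banach space with unit ball `M^o`, equipped with a
continuous isometric action of `ℤ_p` via the operator `γ` (the action of a topological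
generator).  Suppose `(γ-1)^m (M^o) ⊆ p · M^o` for some `m`.  Then the operator
`log γ = ∑_{n ≥ 0} (-1)^n (γ-1)^{n+1} / (n+1)` converges on `M`, and its image satisfies
`log γ (M) ⊆ (γ - 1)(M)`. -/
theorem stmt0 (p : ℕ) [Fact p.Prime]
    (M : Type*) [NormedAddCommGroup M] [NormedSpace ℚ_[p] M] [CompleteSpace M]
    (γ : M →L[ℚ_[p]] M) (hbij : Function.Bijective γ)
    (hiso : ∀ x : M, ‖γ x‖ = ‖x‖)
    (m : ℕ)
    (hm : ∀ x : M, ‖x‖ ≤ 1 → ‖((γ - 1) ^ m) x‖ ≤ (p : ℝ)⁻¹) :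
    ∀ x : M,
      Summable (fun n : ℕ =>
        (((-1 : ℚ_[p]) ^ n / ((n : ℚ_[p]) + 1)) • (((γ - 1) ^ (n + 1)) x))) ∧
      ∃ y : M, (γ - 1) y =
        ∑' n : ℕ, (((-1 : ℚ_[p]) ^ n / ((n : ℚ_[p]) + 1)) • (((γ - 1) ^ (n + 1)) x)) := by
  intro x
  have hprime : p.Prime := Fact.out
  have hp1 : (1 : ℝ) < p := by exact_mod_cast hprime.one_lt
  have hp0 : (0 : ℝ) < p := lt_trans one_pos hp1
  set T : M →L[ℚ_[p]] M := γ - 1 with hTdef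
  -- `T` is bounded by `2`
  have hT2 : ∀ y : M, ‖T y‖ ≤ 2 * ‖y‖ := by
    intro y
    have h1 : T y = γ y - y := by simp [hTdef]
    rw [h1]
    calc ‖γ y - y‖ ≤ ‖γ y‖ + ‖y‖ := norm_sub_le _ _
      _ = 2 * ‖y‖ := by rw [hiso]; ring
  have hTpow : ∀ (r : ℕ) (y : M), ‖(T ^ r) y‖ ≤ 2 ^ r * ‖y‖ := by
    intro r
    induction r with
    | zero => intro y; simp
    | succ r ih =>
      intro y
      have h1 : (T ^ (r + 1)) y = (T ^ r) (T y) := by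
        rw [pow_succ, ContinuousLinearMap.mul_apply]
      rw [h1]
      calc ‖(T ^ r) (T y)‖ ≤ 2 ^ r * ‖T y‖ := ih (T y)
        _ ≤ 2 ^ r * (2 * ‖y‖) := by
            exact mul_le_mul_of_nonneg_left (hT2 y) (by positivity)
        _ = 2 ^ (r + 1) * ‖y‖ := by ring
  -- the shrinking property at all scales
  have hscale : ∀ (y : M) (k : ℤ), ‖y‖ ≤ (p : ℝ) ^ k → ‖(T ^ m) y‖ ≤ (p : ℝ) ^ (k - 1) := by
    intro y k hy
    have hz : ‖((p : ℚ_[p]) ^ k) • y‖ ≤ 1 := by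
      rw [norm_smul, Padic.norm_p_zpow]
      calc (p : ℝ) ^ (-k) * ‖y‖ ≤ (p : ℝ) ^ (-k) * (p : ℝ) ^ k :=
            mul_le_mul_of_nonneg_left hy (zpow_nonneg hp0.le _)
        _ = 1 := by rw [← zpow_add₀ (ne_of_gt hp0)]; simp
    have h2 := hm _ hz
    rw [map_smul, norm_smul, Padic.norm_p_zpow] at h2
    have h3 : (p : ℝ) ^ (-k) * ‖(T ^ m) y‖ ≤ (p : ℝ)⁻¹ := h2
    have h4 : (0 : ℝ) < (p : ℝ) ^ (-k) := zpow_pos hp0 _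
    calc ‖(T ^ m) y‖ = (p : ℝ) ^ k * ((p : ℝ) ^ (-k) * ‖(T ^ m) y‖) := by
          rw [← mul_assoc, ← zpow_add₀ (ne_of_gt hp0)]; simp
      _ ≤ (p : ℝ) ^ k * (p : ℝ)⁻¹ :=
          mul_le_mul_of_nonneg_left h3 (zpow_nonneg hp0.le _)
      _ = (p : ℝ) ^ (k - 1) := by
          rw [← zpow_neg_one, ← zpow_add₀ (ne_of_gt hp0), ← sub_eq_add_neg]
  have hiter : ∀ (y : M), ‖y‖ ≤ 1 → ∀ k : ℕ, ‖(T ^ (m * k)) y‖ ≤ (p : ℝ) ^ (-(k : ℤ)) := by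
    intro y hy
    intro k
    induction k with
    | zero => simpa using hy
    | succ k ih =>
      have h1 : (T ^ (m * (k + 1))) y = (T ^ m) ((T ^ (m * k)) y) := by
        have he : m * (k + 1) = m + m * k := by ring
        rw [he, pow_add, ContinuousLinearMap.mul_apply]
      rw [h1]
      have h2 := hscale _ _ ih
      have h3 : (-(k : ℤ)) - 1 = -((k : ℤ) + 1) := by ring
      rw [h3] at h2
      simpa using h2
  by_cases hm0 : m = 0
  · -- in this degenerate case `M = 0`
    have hsmall : ∀ y : M, ‖y‖ ≤ 1 → y = 0 := by
      intro y hy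
      have h1 : ∀ k : ℕ, ‖y‖ ≤ ((p : ℝ)⁻¹) ^ k := by
        intro k
        have := hiter y hy k
        rw [hm0, zero_mul, pow_zero] at this
        simpa [zpow_neg, ← inv_zpow] using this
      have htend : Tendsto (fun k : ℕ => ((p : ℝ)⁻¹) ^ k) atTop (nhds 0) :=
        tendsto_pow_atTop_nhds_zero_of_lt_one (by positivity)
          (by rw [inv_lt_one_iff₀]; right; exact hp1)
      have : ‖y‖ ≤ 0 := ge_of_tendsto' htend h1
      simpa using le_antisymm this (norm_nonneg y)
    have hall : ∀ z : M, z = 0 := by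
      intro z
      obtain ⟨j, hj⟩ := pow_unbounded_of_one_lt ‖z‖ hp1
      have hz1 : ‖((p : ℚ_[p]) ^ j) • z‖ ≤ 1 := by
        rw [norm_smul, Padic.norm_p_pow]
        have : (p : ℝ) ^ (-(j : ℤ)) * ‖z‖ ≤ (p : ℝ) ^ (-(j : ℤ)) * (p : ℝ) ^ j :=
          mul_le_mul_of_nonneg_left hj.le (zpow_nonneg hp0.le _)
        calc (p : ℝ) ^ (-(j : ℤ)) * ‖z‖ ≤ (p : ℝ) ^ (-(j : ℤ)) * (p : ℝ) ^ (j : ℤ) := by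
              simpa [zpow_natCast] using this
          _ = 1 := by rw [← zpow_add₀ (ne_of_gt hp0)]; simp
      have h0 : ((p : ℚ_[p]) ^ j) • z = 0 := hsmall _ hz1
      have hpne : ((p : ℚ_[p]) ^ j) ≠ 0 := by
        apply pow_ne_zero
        exact_mod_cast hprime.ne_zero
      exact (smul_eq_zero.mp h0).resolve_left hpne
    have hx0 : x = 0 := hall x
    subst hx0
    refine ⟨by simpa using summable_zero, 0, by simp⟩
  · -- main case: `m ≥ 1`
    have hm1 : (1 : ℝ) ≤ m := by
      have := Nat.one_le_iff_ne_zero.2 hm0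
      exact_mod_cast this
    have hmpos : (0 : ℝ) < m := lt_of_lt_of_le one_pos hm1
    set r : ℝ := (p : ℝ) ^ (-(1 : ℝ) / m) with hrdef
    have hr0 : 0 < r := Real.rpow_pos_of_pos hp0 _
    have hr1 : r < 1 :=
      Real.rpow_lt_one_of_one_lt_of_neg hp1 (by rw [neg_div]; exact neg_neg_iff_pos.mpr (by positivity))
    -- key estimate on nat division
    have hkey : ∀ n : ℕ, (p : ℝ) ^ (-((n / m : ℕ) : ℤ)) ≤ (p : ℝ) * r ^ n := by
      intro n
      have hrn : r ^ n = (p : ℝ) ^ ((-(1 : ℝ) / m) * n) := by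
        rw [hrdef, ← Real.rpow_natCast ((p : ℝ) ^ (-(1 : ℝ) / m)) n, ← Real.rpow_mul hp0.le]
      have hlhs : (p : ℝ) ^ (-((n / m : ℕ) : ℤ)) = (p : ℝ) ^ ((-((n / m : ℕ) : ℝ))) := by
        rw [← Real.rpow_intCast]
        congr 1
        rw [Int.cast_neg, Int.cast_natCast]
      have hrhs : (p : ℝ) * r ^ n = (p : ℝ) ^ ((1 : ℝ) + (-(1 : ℝ) / m) * n) := by
        rw [hrn, Real.rpow_add hp0, Real.rpow_one]
      rw [hlhs, hrhs]
      apply Real.rpow_le_rpow_left_iff hp1 |>.mpr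
      -- need : -(n/m : ℕ) ≤ 1 - n/m
      have hdiv : (n : ℝ) < (((n / m : ℕ) : ℝ) + 1) * m := by
        have hmn : 0 < m := Nat.pos_of_ne_zero hm0
        have h1 : n < (n / m + 1) * m :=
          (Nat.div_lt_iff_lt_mul hmn).mp (Nat.lt_succ_self _)
        exact_mod_cast h1
      have h2 : (n : ℝ) / m < ((n / m : ℕ) : ℝ) + 1 := by
        rw [div_lt_iff₀ hmpos]; exact hdiv
      have h3 : (-(1 : ℝ) / m) * n = -((n : ℝ) / m) := by field_simp
      rw [h3]
      linarith
    -- bound on iterates for unit vectors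
    have hbound1 : ∀ y : M, ‖y‖ ≤ 1 → ∀ n : ℕ,
        ‖(T ^ n) y‖ ≤ 2 ^ m * ((p : ℝ) * r ^ n) := by
      intro y hy n
      have hsplit : (T ^ n) y = (T ^ (n % m)) ((T ^ (m * (n / m))) y) := by
        conv_lhs => rw [← Nat.mod_add_div n m]
        rw [pow_add, ContinuousLinearMap.mul_apply]
      rw [hsplit]
      calc ‖(T ^ (n % m)) ((T ^ (m * (n / m))) y)‖
          ≤ 2 ^ (n % m) * ‖(T ^ (m * (n / m))) y‖ := hTpow _ _
        _ ≤ 2 ^ m * ‖(T ^ (m * (n / m))) y‖ := by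
            apply mul_le_mul_of_nonneg_right _ (norm_nonneg _)
            exact pow_le_pow_right₀ one_le_two (Nat.mod_lt n (Nat.pos_of_ne_zero hm0)).le
        _ ≤ 2 ^ m * ((p : ℝ) ^ (-((n / m : ℕ) : ℤ))) := by
            apply mul_le_mul_of_nonneg_left (hiter y hy (n / m)) (by positivity)
        _ ≤ 2 ^ m * ((p : ℝ) * r ^ n) := by
            apply mul_le_mul_of_nonneg_left (hkey n) (by positivity)
    -- bound for our fixed `x`
    obtain ⟨j, hj⟩ := pow_unbounded_of_one_lt ‖x‖ hp1
    set C : ℝ := (p : ℝ) ^ j * (2 ^ m * (p : ℝ)) with hCdef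
    have hC0 : 0 ≤ C := by positivity
    have hz1 : ‖((p : ℚ_[p]) ^ j) • x‖ ≤ 1 := by
      rw [norm_smul, Padic.norm_p_pow]
      calc (p : ℝ) ^ (-(j : ℤ)) * ‖x‖ ≤ (p : ℝ) ^ (-(j : ℤ)) * (p : ℝ) ^ (j : ℤ) := by
            apply mul_le_mul_of_nonneg_left _ (zpow_nonneg hp0.le _)
            simpa [zpow_natCast] using hj.le
        _ = 1 := by rw [← zpow_add₀ (ne_of_gt hp0)]; simp
    have hxb : ∀ n : ℕ, ‖(T ^ n) x‖ ≤ C * r ^ n := by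
      intro n
      have h1 := hbound1 _ hz1 n
      rw [map_smul, norm_smul, Padic.norm_p_pow] at h1
      have h2 : (0 : ℝ) < (p : ℝ) ^ (-(j : ℤ)) := zpow_pos hp0 _
      have h3 : ‖(T ^ n) x‖ = (p : ℝ) ^ (j : ℤ) * ((p : ℝ) ^ (-(j : ℤ)) * ‖(T ^ n) x‖) := by
        rw [← mul_assoc, ← zpow_add₀ (ne_of_gt hp0)]; simp
      rw [h3]
      calc (p : ℝ) ^ (j : ℤ) * ((p : ℝ) ^ (-(j : ℤ)) * ‖(T ^ n) x‖)
          ≤ (p : ℝ) ^ (j : ℤ) * (2 ^ m * ((p : ℝ) * r ^ n)) :=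
            mul_le_mul_of_nonneg_left h1 (zpow_nonneg hp0.le _)
        _ = C * r ^ n := by rw [hCdef, zpow_natCast]; ring
    -- coefficient bound
    have hcoef : ∀ n : ℕ, ‖((-1 : ℚ_[p]) ^ n / ((n : ℚ_[p]) + 1))‖ ≤ (n : ℝ) + 1 := by
      intro n
      have hcast : ((n : ℚ_[p]) + 1) = ((n + 1 : ℕ) : ℚ_[p]) := by push_cast; ring
      have hne : ((n + 1 : ℕ) : ℚ_[p]) ≠ 0 := by
        exact_mod_cast (Nat.cast_ne_zero (R := ℚ_[p])).mpr (Nat.succ_ne_zero n)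
      have hval : ‖((n + 1 : ℕ) : ℚ_[p])‖ = (p : ℝ) ^ (-(padicValNat p (n + 1) : ℤ)) := by
        rw [Padic.norm_eq_zpow_neg_valuation hne, Padic.valuation_natCast]
      have hdvd : (p : ℕ) ^ padicValNat p (n + 1) ≤ n + 1 :=
        Nat.le_of_dvd (Nat.succ_pos n) pow_padicValNat_dvd
      have hdvd' : ((p : ℕ) ^ padicValNat p (n + 1) : ℝ) ≤ (n : ℝ) + 1 := by
        exact_mod_cast hdvd
      rw [norm_div, norm_pow, norm_neg, norm_one, one_pow, hcast, hval]
      rw [zpow_neg, one_div, inv_inv, zpow_natCast]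
      exact_mod_cast hdvd'
    -- the auxiliary series `∑ c_n T^n x`
    set g : ℕ → M := fun n => ((-1 : ℚ_[p]) ^ n / ((n : ℚ_[p]) + 1)) • ((T ^ n) x) with hgdef
    have hgnorm : ∀ n, ‖g n‖ ≤ ((n : ℝ) + 1) * (C * r ^ n) := by
      intro n
      rw [hgdef]
      simp only
      rw [norm_smul]
      exact mul_le_mul (hcoef n) (hxb n) (norm_nonneg _) (by positivity)
    have hmaj : Summable (fun n : ℕ => ((n : ℝ) + 1) * (C * r ^ n)) := by
      have hrn : ‖r‖ < 1 := by rw [Real.norm_of_nonneg hr0.le]; exact hr1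
      have s1 : Summable (fun n : ℕ => (n : ℝ) ^ 1 * r ^ n) :=
        summable_pow_mul_geometric_of_norm_lt_one 1 hrn
      have s2 : Summable (fun n : ℕ => r ^ n) := summable_geometric_of_lt_one hr0.le hr1
      have s3 := ((s1.add s2).mul_left C)
      apply s3.congr
      intro n
      simp only [pow_one]
      ring
    have hg : Summable g := Summable.of_norm_bounded hmaj hgnorm
    have hfeq : ∀ n : ℕ,
        T (g n) = ((-1 : ℚ_[p]) ^ n / ((n : ℚ_[p]) + 1)) • ((T ^ (n + 1)) x) := by
      intro n
      rw [hgdef]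
      simp only [map_smul]
      congr 1
      rw [pow_succ', ContinuousLinearMap.mul_apply]
    constructor
    · have hs := hg.mapL T
      exact hs.congr hfeq
    · refine ⟨∑' n, g n, ?_⟩
      rw [T.map_tsum hg]
      exact tsum_congr hfeq
end

section
/- Let M be a Q_p-Banach space with a continuous Z_p-action such that for some integer m > 0, (γ-1)^m(M^o) ⊆ p·M^o for all γ ∈ Z_p, where M^o is the open unit ball. If moreover (γ-1)(M^o) ⊆ p^2·M^o for all γ ∈ Z_p, then the action of Z_p on M is analytic: for every f ∈ M, the function g : Z_p → M defined by g(x) = Σ_{n≥0} binomial(x,n)·(γ-1)^n·f (with γ = 1 ∈ Z_p acting) converges and satisfies g(x) = x·f, and g is given by a convergent power series in x. -/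
open Filter

section aux
variable {p : ℕ} [hp : Fact p.Prime]

lemma aux_prod_eq (x : ℤ_[p]) (n : ℕ) :
    (∏ i ∈ Finset.range n, ((x : ℚ_[p]) - (i : ℚ_[p]))) =
      (((descPochhammer ℤ_[p] n).eval x : ℤ_[p]) : ℚ_[p]) := by
  induction n with
  | zero => simp
  | succ n ih =>
      rw [Finset.prod_range_succ, ih, descPochhammer_succ_right, Polynomial.eval_mul,
        Polynomial.eval_sub, Polynomial.eval_X, Polynomial.eval_natCast]
      push_cast
      ring

lemma aux_coe_sum {s : Finset ℕ} {g : ℕ → ℤ_[p]} :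
    ((∑ i ∈ s, g i : ℤ_[p]) : ℚ_[p]) = ∑ i ∈ s, ((g i : ℚ_[p])) := by
  induction s using Finset.cons_induction with
  | empty => simp
  | cons a s ha ih => rw [Finset.sum_cons, Finset.sum_cons, PadicInt.coe_add, ih]

lemma aux_norm_desc (x : ℤ_[p]) (n : ℕ) :
    ‖(descPochhammer ℤ_[p] n).eval x‖ ≤ ‖(n.factorial : ℤ_[p])‖ := by
  rw [descPochhammer_eval_eq_ascPochhammer]
  exact PadicInt.norm_ascPochhammer_le n _

lemma aux_fact_ne : ∀ n : ℕ, ((n.factorial : ℚ_[p])) ≠ 0 := fun n =>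
  Nat.cast_ne_zero.mpr n.factorial_ne_zero

lemma aux_norm_c_le_one (x : ℤ_[p]) (n : ℕ) :
    ‖(∏ i ∈ Finset.range n, ((x : ℚ_[p]) - (i : ℚ_[p]))) / (n.factorial : ℚ_[p])‖ ≤ 1 := by
  rw [norm_div, div_le_one (norm_pos_iff.mpr (aux_fact_ne n))]
  rw [aux_prod_eq]
  have h2 : ((n.factorial : ℚ_[p])) = (((n.factorial : ℤ_[p])) : ℚ_[p]) := by push_cast; rfl
  rw [h2, ← PadicInt.norm_def, ← PadicInt.norm_def]
  exact aux_norm_desc x n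

lemma aux_val_fact_le (n : ℕ) : padicValNat p (n.factorial) ≤ n := by
  have h2 : 1 ≤ p - 1 := by have := hp.out.two_le; omega
  calc padicValNat p n.factorial ≤ (p - 1) * padicValNat p n.factorial :=
        Nat.le_mul_of_pos_left _ (by omega)
    _ = n - (p.digits n).sum := sub_one_mul_padicValNat_factorial n
    _ ≤ n := Nat.sub_le _ _

lemma aux_norm_inv_fact_le (n : ℕ) : ‖((n.factorial : ℚ_[p]))⁻¹‖ ≤ (p : ℝ) ^ n := by
  have hp1 : (1:ℝ) ≤ (p:ℝ) := by exact_mod_cast hp.out.one_le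
  rw [norm_inv, Padic.norm_eq_zpow_neg_valuation (aux_fact_ne n), Padic.valuation_natCast, ← zpow_neg,
    neg_neg]
  calc ((p:ℝ)) ^ ((padicValNat p n.factorial : ℤ)) ≤ (p:ℝ) ^ ((n : ℤ)) := by
        apply zpow_le_zpow_right₀ hp1
        exact_mod_cast aux_val_fact_le (p := p) n
    _ = (p:ℝ) ^ n := by rw [zpow_natCast]

lemma aux_pow_bound {M : Type*} [NormedAddCommGroup M] [NormedSpace ℚ_[p] M]
    (A : M →L[ℚ_[p]] M) (hA : ∀ x : M, ‖x‖ < 1 → ‖A x‖ < ((p : ℝ)⁻¹) ^ 2)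
    (n : ℕ) (x : M) (hx : ‖x‖ < 1) : ‖(A ^ n) x‖ < (((p : ℝ)⁻¹) ^ 2) ^ n := by
  have hppos : (0:ℝ) < (p:ℝ) := by exact_mod_cast hp.out.pos
  induction n with
  | zero => simpa using hx
  | succ n ih =>
      have hcnorm : ‖((p : ℚ_[p]) ^ (2 * n))⁻¹‖ = (p : ℝ) ^ (2 * n) := by
        rw [norm_inv, norm_pow, Padic.norm_p, ← inv_pow, inv_inv]
      have h1 : ‖((p : ℚ_[p]) ^ (2 * n))⁻¹ • ((A ^ n) x)‖ < 1 := by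
        rw [norm_smul, hcnorm]
        have : (((p : ℝ)⁻¹) ^ 2) ^ n = ((p:ℝ) ^ (2*n))⁻¹ := by
          rw [← pow_mul, ← inv_pow, mul_comm]
        calc (p:ℝ) ^ (2*n) * ‖(A ^ n) x‖ < (p:ℝ) ^ (2*n) * ((p:ℝ) ^ (2*n))⁻¹ := by
              apply mul_lt_mul_of_pos_left _ (by positivity)
              rw [← this]; exact ih
          _ = 1 := mul_inv_cancel₀ (by positivity)
      have h2 := hA _ h1
      rw [map_smul, norm_smul, hcnorm] at h2
      have h3 : ‖A ((A ^ n) x)‖ < ((p:ℝ)⁻¹) ^ 2 * ((p:ℝ) ^ (2*n))⁻¹ := by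
        rw [← div_eq_mul_inv, lt_div_iff₀ (by positivity), mul_comm]
        exact h2
      have h4 : (((p : ℝ)⁻¹) ^ 2) ^ (n+1) = ((p:ℝ)⁻¹) ^ 2 * ((p:ℝ) ^ (2*n))⁻¹ := by
        rw [← pow_mul, ← inv_pow, ← pow_add]
        ring_nf
      rw [pow_succ', ContinuousLinearMap.mul_apply, h4]
      exact h3
end aux

/-- Let `M` be a `ℚ_p`-Banach space with a continuous `ℤ_p`-action `ρ` such
that for some `m > 0`, `(γ - 1)^m (M^o) ⊆ p · M^o` for all `γ ∈ ℤ_p`, where `M^o` is the open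
unit ball.  If moreover `(γ - 1)(M^o) ⊆ p² · M^o` for all `γ`, then the action of `ℤ_p` on `M`
is analytic: for every `f ∈ M` the function `g(x) = ∑ₙ binom(x,n) • (γ-1)^n f` (with
`γ = ρ 1`) converges and satisfies `g x = ρ x f`, and `g` is given by a convergent power
series in `x` with coefficients tending to `0`. -/
theorem stmt1 (p : ℕ) [Fact p.Prime]
    (M : Type*) [NormedAddCommGroup M] [NormedSpace ℚ_[p] M] [CompleteSpace M]
    (ρ : ℤ_[p] → M →L[ℚ_[p]] M)
    (hρ0 : ρ 0 = 1)
    (hρadd : ∀ a b : ℤ_[p], ρ (a + b) = ρ a * ρ b)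
    (hcont : Continuous fun q : ℤ_[p] × M => ρ q.1 q.2)
    (m : ℕ) (hm : 0 < m)
    (hpow : ∀ (γ : ℤ_[p]) (x : M), ‖x‖ < 1 → ‖((ρ γ - 1) ^ m) x‖ < (p : ℝ)⁻¹)
    (hsq : ∀ (γ : ℤ_[p]) (x : M), ‖x‖ < 1 → ‖(ρ γ - 1) x‖ < ((p : ℝ)⁻¹) ^ 2) :
    ∀ f : M,
      (∀ x : ℤ_[p],
        HasSum (fun n : ℕ =>
          ((∏ i ∈ Finset.range n, ((x : ℚ_[p]) - (i : ℚ_[p]))) / (n.factorial : ℚ_[p])) •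
            (((ρ 1 - 1) ^ n) f)) (ρ x f)) ∧
      ∃ b : ℕ → M, Tendsto b atTop (nhds 0) ∧
        ∀ x : ℤ_[p], HasSum (fun k : ℕ => ((x : ℚ_[p]) ^ k) • b k) (ρ x f) := by
  intro f
  have hp' : Fact p.Prime := inferInstance
  have hppos : (0:ℝ) < (p:ℝ) := by exact_mod_cast hp'.out.pos
  have hp1 : (1:ℝ) < (p:ℝ) := by exact_mod_cast hp'.out.one_lt
  set r : ℝ := (p:ℝ)⁻¹ with hrdef
  have hr0 : 0 < r := by positivity
  have hr1 : r < 1 := by rw [hrdef, inv_lt_one_iff₀]; right; exact hp1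
  set A := ρ 1 - 1 with hAdef
  have hA : ∀ x : M, ‖x‖ < 1 → ‖A x‖ < ((p : ℝ)⁻¹) ^ 2 := hsq 1
  -- geometric bound on ‖Aⁿ f‖
  obtain ⟨C, hC0, hC⟩ : ∃ C : ℝ, 0 < C ∧ ∀ n, ‖(A ^ n) f‖ ≤ C * (r ^ 2) ^ n := by
    obtain ⟨j, hj⟩ := pow_unbounded_of_one_lt ‖f‖ hp1
    refine ⟨(p:ℝ) ^ j, by positivity, fun n => ?_⟩
    have hg : ‖((p : ℚ_[p]) ^ j) • f‖ < 1 := by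
      rw [norm_smul, norm_pow, Padic.norm_p]
      calc ((p:ℝ)⁻¹) ^ j * ‖f‖ < ((p:ℝ)⁻¹) ^ j * (p:ℝ) ^ j := by
            rcases eq_or_lt_of_le (norm_nonneg f) with h | h
            · rw [← h, mul_zero]; positivity
            · exact mul_lt_mul_of_pos_left hj (by positivity)
        _ = 1 := by rw [← mul_pow, inv_mul_cancel₀ (ne_of_gt hppos), one_pow]
    have hb := (aux_pow_bound A hA n _ hg).le
    rw [map_smul, norm_smul, norm_pow, Padic.norm_p] at hb
    rw [← hrdef] at hb
    calc ‖(A ^ n) f‖ = ((p:ℝ) ^ j) * (r ^ j * ‖(A ^ n) f‖) := by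
          rw [← mul_assoc, hrdef, ← mul_pow, mul_inv_cancel₀ (ne_of_gt hppos), one_pow, one_mul]
      _ ≤ (p:ℝ) ^ j * (r ^ 2) ^ n := by
          apply mul_le_mul_of_nonneg_left _ (by positivity)
          rwa [hrdef]
  -- summable majorant
  have hu : Summable (fun n : ℕ => C * r ^ n) :=
    (summable_geometric_of_lt_one hr0.le hr1).mul_left C
  have hr2n : ∀ n : ℕ, (r ^ 2) ^ n ≤ r ^ n := by
    intro n
    calc (r ^ 2) ^ n = r ^ n * r ^ n := by
          rw [← pow_mul, two_mul, pow_add]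
      _ ≤ 1 * r ^ n := by
          apply mul_le_mul_of_nonneg_right _ (by positivity)
          exact pow_le_one₀ hr0.le hr1.le
      _ = r ^ n := one_mul _
  have hterm_bound : ∀ (x : ℤ_[p]) (n : ℕ),
      ‖((∏ i ∈ Finset.range n, ((x : ℚ_[p]) - (i : ℚ_[p]))) / (n.factorial : ℚ_[p])) •
        ((A ^ n) f)‖ ≤ C * r ^ n := by
    intro x n
    rw [norm_smul]
    calc ‖(∏ i ∈ Finset.range n, ((x : ℚ_[p]) - (i : ℚ_[p]))) / (n.factorial : ℚ_[p])‖ *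
          ‖(A ^ n) f‖ ≤ 1 * (C * (r ^ 2) ^ n) :=
          mul_le_mul (aux_norm_c_le_one x n) (hC n) (norm_nonneg _) zero_le_one
      _ = C * (r ^ 2) ^ n := one_mul _
      _ ≤ C * r ^ n := mul_le_mul_of_nonneg_left (hr2n n) hC0.le
  have hS : ∀ x : ℤ_[p], Summable (fun n : ℕ =>
      ((∏ i ∈ Finset.range n, ((x : ℚ_[p]) - (i : ℚ_[p]))) / (n.factorial : ℚ_[p])) •
        ((A ^ n) f)) := fun x =>
    Summable.of_norm_bounded hu (hterm_bound x)
  -- the function g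
  have hcoe : Continuous fun x : ℤ_[p] => (x : ℚ_[p]) := continuous_subtype_val
  have hcont_term : ∀ n : ℕ, Continuous fun x : ℤ_[p] =>
      ((∏ i ∈ Finset.range n, ((x : ℚ_[p]) - (i : ℚ_[p]))) / (n.factorial : ℚ_[p])) •
        ((A ^ n) f) := by
    intro n
    apply Continuous.smul _ continuous_const
    apply Continuous.div_const
    exact continuous_finset_prod _ fun i _ => hcoe.sub continuous_const
  have hgcont : Continuous fun x : ℤ_[p] => ∑' n : ℕ,
      ((∏ i ∈ Finset.range n, ((x : ℚ_[p]) - (i : ℚ_[p]))) / (n.factorial : ℚ_[p])) •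
        ((A ^ n) f) :=
    continuous_tsum hcont_term hu (fun n x => hterm_bound x n)
  have hρfcont : Continuous fun x : ℤ_[p] => ρ x f :=
    hcont.comp (continuous_id.prodMk continuous_const)
  -- values at natural numbers
  have hρ1 : ρ 1 = A + 1 := by rw [hAdef, sub_add_cancel]
  have hρnat : ∀ k : ℕ, ρ ((k : ℕ) : ℤ_[p]) = (ρ 1) ^ k := by
    intro k
    induction k with
    | zero => simpa using hρ0
    | succ k ih => rw [Nat.cast_succ, hρadd, ih, pow_succ]
  have hcnat : ∀ k n : ℕ,
      ((∏ i ∈ Finset.range n, (((k : ℤ_[p]) : ℚ_[p]) - (i : ℚ_[p]))) / (n.factorial : ℚ_[p]))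
        = ((k.choose n : ℕ) : ℚ_[p]) := by
    intro k n
    rw [aux_prod_eq, descPochhammer_eval_eq_descFactorial,
      Nat.descFactorial_eq_factorial_mul_choose]
    push_cast
    exact mul_div_cancel_left₀ _ (aux_fact_ne n)
  have hg_nat : ∀ k : ℕ, HasSum (fun n : ℕ =>
      ((∏ i ∈ Finset.range n, (((k : ℤ_[p]) : ℚ_[p]) - (i : ℚ_[p]))) / (n.factorial : ℚ_[p])) •
        ((A ^ n) f)) (ρ ((k : ℕ) : ℤ_[p]) f) := by
    intro k
    have hzero : ∀ n ∉ Finset.range (k+1),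
        ((∏ i ∈ Finset.range n, (((k : ℤ_[p]) : ℚ_[p]) - (i : ℚ_[p]))) / (n.factorial : ℚ_[p])) •
          ((A ^ n) f) = 0 := by
      intro n hn
      rw [Finset.mem_range, not_lt] at hn
      have : (∏ i ∈ Finset.range n, (((k : ℤ_[p]) : ℚ_[p]) - (i : ℚ_[p]))) = 0 := by
        apply Finset.prod_eq_zero (Finset.mem_range.mpr (by omega : k < n))
        push_cast
        ring
      rw [this, zero_div, zero_smul]
    have hsum := hasSum_sum_of_ne_finset_zero (L := SummationFilter.unconditional ℕ) hzero
    suffices hEq : (∑ n ∈ Finset.range (k+1),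
        ((∏ i ∈ Finset.range n, (((k : ℤ_[p]) : ℚ_[p]) - (i : ℚ_[p]))) / (n.factorial : ℚ_[p])) •
          ((A ^ n) f)) = ρ ((k : ℕ) : ℤ_[p]) f by rwa [hEq] at hsum
    rw [hρnat k, hρ1, (Commute.one_right A).add_pow, ContinuousLinearMap.sum_apply]
    apply Finset.sum_congr rfl
    intro n _
    rw [one_pow, mul_one, ContinuousLinearMap.mul_apply, ContinuousLinearMap.natCast_apply,
      map_nsmul, hcnat k n, Nat.cast_smul_eq_nsmul]
  have heq : (fun x : ℤ_[p] => ∑' n : ℕ,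
      ((∏ i ∈ Finset.range n, ((x : ℚ_[p]) - (i : ℚ_[p]))) / (n.factorial : ℚ_[p])) •
        ((A ^ n) f)) = fun x => ρ x f := by
    apply PadicInt.denseRange_natCast.equalizer hgcont hρfcont
    funext k
    exact (hg_nat k).tsum_eq
  have part1 : ∀ x : ℤ_[p], HasSum (fun n : ℕ =>
      ((∏ i ∈ Finset.range n, ((x : ℚ_[p]) - (i : ℚ_[p]))) / (n.factorial : ℚ_[p])) •
        ((A ^ n) f)) (ρ x f) := by
    intro x
    have h := (hS x).hasSum
    rwa [congrFun heq x] at h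
  refine ⟨part1, ?_⟩
  -- Part 2: power series coefficients
  have hkey : ∀ n : ℕ, (p:ℝ) ^ n * (r ^ 2) ^ n = r ^ n := by
    intro n
    rw [hrdef, ← mul_pow, sq, ← mul_assoc, mul_inv_cancel₀ (ne_of_gt hppos), one_mul]
  have hdzero : ∀ n k : ℕ, n < k → ((descPochhammer ℤ_[p] n).coeff k) = 0 := by
    intro n k h
    apply Polynomial.coeff_eq_zero_of_natDegree_lt
    rwa [descPochhammer_natDegree]
  have hdzero' : ∀ n k : ℕ, n < k →
      ((((descPochhammer ℤ_[p] n).coeff k : ℤ_[p]) : ℚ_[p]) / (n.factorial : ℚ_[p])) •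
        ((A ^ n) f) = 0 := by
    intro n k h
    rw [hdzero n k h]
    simp
  have hdbound : ∀ n k : ℕ,
      ‖((((descPochhammer ℤ_[p] n).coeff k : ℤ_[p]) : ℚ_[p]) / (n.factorial : ℚ_[p])) •
        ((A ^ n) f)‖ ≤ C * r ^ n := by
    intro n k
    rw [norm_smul, div_eq_mul_inv, norm_mul]
    have h1 : ‖(((descPochhammer ℤ_[p] n).coeff k : ℤ_[p]) : ℚ_[p])‖ ≤ 1 := by
      rw [← PadicInt.norm_def]
      exact PadicInt.norm_le_one _
    calc ‖(((descPochhammer ℤ_[p] n).coeff k : ℤ_[p]) : ℚ_[p])‖ *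
          ‖((n.factorial : ℚ_[p]))⁻¹‖ * ‖(A ^ n) f‖
        ≤ 1 * (p:ℝ) ^ n * (C * (r ^ 2) ^ n) := by
          apply mul_le_mul (mul_le_mul h1 (aux_norm_inv_fact_le n) (norm_nonneg _) zero_le_one)
            (hC n) (norm_nonneg _) (by positivity)
      _ = C * ((p:ℝ) ^ n * (r ^ 2) ^ n) := by ring
      _ = C * r ^ n := by rw [hkey n]
  have hbS : ∀ k : ℕ, Summable (fun n : ℕ =>
      ((((descPochhammer ℤ_[p] n).coeff k : ℤ_[p]) : ℚ_[p]) / (n.factorial : ℚ_[p])) •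
        ((A ^ n) f)) := fun k =>
    Summable.of_norm_bounded hu (fun n => hdbound n k)
  set b : ℕ → M := fun k => ∑' n : ℕ,
      ((((descPochhammer ℤ_[p] n).coeff k : ℤ_[p]) : ℚ_[p]) / (n.factorial : ℚ_[p])) •
        ((A ^ n) f) with hbdef
  -- norm bound on b k
  have hb_norm : ∀ k : ℕ, ‖b k‖ ≤ (C * (1 - r)⁻¹) * r ^ k := by
    intro k
    have hnormsum : Summable fun n : ℕ =>
        ‖((((descPochhammer ℤ_[p] n).coeff k : ℤ_[p]) : ℚ_[p]) / (n.factorial : ℚ_[p])) •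
          ((A ^ n) f)‖ :=
      Summable.of_nonneg_of_le (fun _ => norm_nonneg _) (fun n => hdbound n k) hu
    have hhsum : Summable (fun n : ℕ => if k ≤ n then C * r ^ n else 0) := by
      apply Summable.of_nonneg_of_le _ _ hu
      · intro n; split <;> positivity
      · intro n; split
        · exact le_refl _
        · positivity
    have h1 : ‖b k‖ ≤ ∑' n : ℕ,
        ‖((((descPochhammer ℤ_[p] n).coeff k : ℤ_[p]) : ℚ_[p]) / (n.factorial : ℚ_[p])) •
          ((A ^ n) f)‖ := norm_tsum_le_tsum_norm hnormsum
    have h2 : (∑' n : ℕ,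
        ‖((((descPochhammer ℤ_[p] n).coeff k : ℤ_[p]) : ℚ_[p]) / (n.factorial : ℚ_[p])) •
          ((A ^ n) f)‖) ≤ ∑' n : ℕ, (if k ≤ n then C * r ^ n else 0) := by
      apply Summable.tsum_le_tsum _ hnormsum hhsum
      intro n
      by_cases hkn : k ≤ n
      · rw [if_pos hkn]; exact hdbound n k
      · rw [if_neg hkn, hdzero' n k (by omega)]
        simp
    have h3 : (∑' n : ℕ, (if k ≤ n then C * r ^ n else 0)) = (C * r ^ k) * (1 - r)⁻¹ := by
      have hinj : Function.Injective (fun j : ℕ => j + k) := add_left_injective k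
      have hsupp : Function.support (fun n : ℕ => if k ≤ n then C * r ^ n else 0) ⊆
          Set.range (fun j : ℕ => j + k) := by
        intro n hn
        simp only [Function.mem_support] at hn
        by_cases hkn : k ≤ n
        · exact ⟨n - k, by dsimp only; omega⟩
        · exact absurd (if_neg hkn) hn
      rw [← hinj.tsum_eq hsupp]
      have hcongr : ∀ j : ℕ,
          (if k ≤ j + k then C * r ^ (j + k) else 0) = (C * r ^ k) * r ^ j := by
        intro j
        rw [if_pos (Nat.le_add_left k j), pow_add]
        ring
      rw [tsum_congr hcongr, tsum_mul_left, tsum_geometric_of_lt_one hr0.le hr1]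
    calc ‖b k‖ ≤ _ := h1
      _ ≤ _ := h2
      _ = (C * r ^ k) * (1 - r)⁻¹ := h3
      _ = (C * (1 - r)⁻¹) * r ^ k := by ring
  have hbtend : Tendsto b atTop (nhds 0) := by
    have ht := (tendsto_pow_atTop_nhds_zero_of_lt_one hr0.le hr1).const_mul (C * (1 - r)⁻¹)
    rw [mul_zero] at ht
    exact squeeze_zero_norm hb_norm ht
  refine ⟨b, hbtend, ?_⟩
  intro x
  set F : ℕ × ℕ → M := fun q =>
    ((x : ℚ_[p]) ^ q.2 *
      ((((descPochhammer ℤ_[p] q.1).coeff q.2 : ℤ_[p]) : ℚ_[p]) / (q.1.factorial : ℚ_[p]))) •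
      ((A ^ q.1) f) with hFdef
  have hxnorm : ∀ k : ℕ, ‖(x : ℚ_[p]) ^ k‖ ≤ 1 := by
    intro k
    rw [norm_pow, ← PadicInt.norm_def]
    exact pow_le_one₀ (norm_nonneg _) x.norm_le_one
  have hFsmul : ∀ q : ℕ × ℕ, F q = (x : ℚ_[p]) ^ q.2 •
      (((((descPochhammer ℤ_[p] q.1).coeff q.2 : ℤ_[p]) : ℚ_[p]) / (q.1.factorial : ℚ_[p])) •
        ((A ^ q.1) f)) := fun q => mul_smul _ _ _
  have hFbound : ∀ q : ℕ × ℕ, ‖F q‖ ≤ (if q.2 ≤ q.1 then C * r ^ q.1 else 0) := by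
    intro q
    by_cases h : q.2 ≤ q.1
    · rw [if_pos h, hFsmul q, norm_smul]
      calc ‖(x : ℚ_[p]) ^ q.2‖ * _ ≤ 1 * (C * r ^ q.1) :=
            mul_le_mul (hxnorm q.2) (hdbound q.1 q.2) (norm_nonneg _) zero_le_one
        _ = C * r ^ q.1 := one_mul _
    · rw [if_neg h, hFsmul q, hdzero' q.1 q.2 (by omega)]
      simp
  have hmaj : Summable (fun q : ℕ × ℕ => if q.2 ≤ q.1 then C * r ^ q.1 else 0) := by
    apply (summable_prod_of_nonneg ?_).mpr
    · constructor
      · intro n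
        apply summable_of_ne_finset_zero (s := Finset.range (n + 1))
        intro k hk
        rw [Finset.mem_range] at hk
        rw [if_neg (by omega)]
      · have hrow : ∀ n : ℕ, (∑' k : ℕ, (if k ≤ n then C * r ^ n else 0))
            = ((n : ℝ) + 1) * (C * r ^ n) := by
          intro n
          rw [tsum_eq_sum (s := Finset.range (n + 1))
            (fun k hk => by rw [Finset.mem_range] at hk; rw [if_neg (by omega)])]
          rw [Finset.sum_congr rfl
            (fun k hk => if_pos (by rw [Finset.mem_range] at hk; omega))]
          rw [Finset.sum_const, Finset.card_range, nsmul_eq_mul]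
          push_cast
          ring
        have hsum2 : Summable fun n : ℕ => ((n : ℝ) + 1) * (C * r ^ n) := by
          have h1 := summable_pow_mul_geometric_of_norm_lt_one (R := ℝ) 1
            (r := r) (by rw [Real.norm_eq_abs, abs_of_pos hr0]; exact hr1)
          apply Summable.congr ((h1.mul_left C).add
            ((summable_geometric_of_lt_one hr0.le hr1).mul_left C))
          intro n
          push_cast
          ring
        exact hsum2.congr (fun n => (hrow n).symm)
    · intro q
      dsimp only
      split <;> positivity
  have hFsummable : Summable F := Summable.of_norm_bounded hmaj hFbound
  have hrowsum : ∀ n : ℕ, HasSum (fun k : ℕ => F (n, k))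
      (((∏ i ∈ Finset.range n, ((x : ℚ_[p]) - (i : ℚ_[p]))) / (n.factorial : ℚ_[p])) •
        ((A ^ n) f)) := by
    intro n
    have hz : ∀ k ∉ Finset.range (n + 1), F (n, k) = 0 := by
      intro k hk
      rw [Finset.mem_range] at hk
      rw [hFsmul (n, k), hdzero' n k (by omega)]
      simp
    have hfin := hasSum_sum_of_ne_finset_zero (L := SummationFilter.unconditional ℕ) hz
    have hsum_eq : (∑ k ∈ Finset.range (n + 1), F (n, k)) =
        ((∏ i ∈ Finset.range n, ((x : ℚ_[p]) - (i : ℚ_[p]))) / (n.factorial : ℚ_[p])) •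
          ((A ^ n) f) := by
      rw [show (∑ k ∈ Finset.range (n + 1), F (n, k)) = ∑ k ∈ Finset.range (n + 1),
        ((x : ℚ_[p]) ^ k *
          ((((descPochhammer ℤ_[p] n).coeff k : ℤ_[p]) : ℚ_[p]) / (n.factorial : ℚ_[p]))) •
          ((A ^ n) f) from rfl]
      rw [← Finset.sum_smul]
      congr 1
      rw [aux_prod_eq, Polynomial.eval_eq_sum_range, descPochhammer_natDegree,
        aux_coe_sum, Finset.sum_div]
      simp only [PadicInt.coe_mul, PadicInt.coe_pow]
      apply Finset.sum_congr rfl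
      intro k _
      ring
    exact hsum_eq ▸ hfin
  have hFtot : HasSum F (ρ x f) := by
    have h1 := hFsummable.hasSum
    have h2 := h1.prod_fiberwise hrowsum
    rwa [h2.unique (part1 x)] at h1
  have hcol : ∀ k : ℕ, HasSum (fun n : ℕ => F (n, k)) (((x : ℚ_[p]) ^ k) • b k) := by
    intro k
    have h := ((hbS k).hasSum).const_smul ((x : ℚ_[p]) ^ k)
    have heqF : (fun n : ℕ => F (n, k)) = fun n : ℕ => (x : ℚ_[p]) ^ k •
        (((((descPochhammer ℤ_[p] n).coeff k : ℤ_[p]) : ℚ_[p]) / (n.factorial : ℚ_[p])) •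
          ((A ^ n) f)) := funext fun n => hFsmul (n, k)
    rw [heqF]
    exact h
  have hswap : HasSum (F ∘ (Equiv.prodComm ℕ ℕ)) (ρ x f) :=
    ((Equiv.prodComm ℕ ℕ).hasSum_iff).mpr hFtot
  exact hswap.prod_fiberwise hcol
end

section
/- Let M^• be a bounded-above cochain complex of p-adically complete, p-torsion-free Z_p-modules. Then for each i, the cohomology group H^i(M^•) satisfies Hom_{Z_p}(Q_p, H^i(M^•)) = 0. -/
private lemma mem_span_smul_top_iff {R M : Type*} [CommRing R] [AddCommGroup M] [Module R M]
    (a : R) (x : M) :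
    x ∈ Ideal.span {a} • (⊤ : Submodule R M) ↔ ∃ y, a • y = x := by
  constructor
  · intro h
    refine Submodule.smul_induction_on h ?_ ?_
    · rintro r hr m -
      obtain ⟨c, rfl⟩ := Ideal.mem_span_singleton'.mp hr
      exact ⟨c • m, by rw [smul_smul, mul_comm]⟩
    · rintro x y ⟨u, rfl⟩ ⟨v, rfl⟩; exact ⟨u + v, smul_add a u v⟩
  · rintro ⟨y, rfl⟩; exact Submodule.smul_mem_smul (Ideal.mem_span_singleton_self a) trivial

private lemma mem_pow_span_smul_top_iff {R M : Type*} [CommRing R] [AddCommGroup M] [Module R M]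
    (a : R) (n : ℕ) (x : M) :
    x ∈ (Ideal.span {a}) ^ n • (⊤ : Submodule R M) ↔ ∃ y, a ^ n • y = x := by
  rw [Ideal.span_singleton_pow]; exact mem_span_smul_top_iff _ _

private lemma stmt2_aux (p : ℕ) [Fact p.Prime] (A B : Type*)
    [AddCommGroup A] [Module ℤ_[p] A] [AddCommGroup B] [Module ℤ_[p] B]
    (f : A →ₗ[ℤ_[p]] B) (K : Submodule ℤ_[p] B)
    (hA : IsAdicComplete (Ideal.span {(p : ℤ_[p])}) A)
    (hB : IsAdicComplete (Ideal.span {(p : ℤ_[p])}) B)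
    (φ : ℚ_[p] →ₗ[ℤ_[p]] K ⧸ Submodule.comap K.subtype (LinearMap.range f)) :
    φ = 0 := by
  ext q
  simp only [LinearMap.zero_apply]
  have hdiv : ∀ n : ℕ, (p : ℤ_[p]) • (q / (p : ℚ_[p]) ^ (n + 1)) = q / (p : ℚ_[p]) ^ n := by
    intro n
    show ((p : ℤ_[p]) : ℚ_[p]) * _ = _
    have hp0 : (p : ℚ_[p]) ≠ 0 := Nat.cast_ne_zero.mpr (Fact.out : p.Prime).ne_zero
    have hp : ((p : ℤ_[p]) : ℚ_[p]) = (p : ℚ_[p]) := by push_cast; ring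
    rw [hp]; field_simp; ring
  -- lift φ (q / p^n) to z n : K
  have hlift : ∀ n : ℕ, ∃ z : K, Submodule.Quotient.mk z = φ (q / (p : ℚ_[p]) ^ n) :=
    fun n => Submodule.Quotient.mk_surjective _ _
  choose z hz using hlift
  -- the chain relation: p • z (n+1) - z n hits range f
  have hchain : ∀ n : ℕ, ∃ y : A, f y = ((p : ℤ_[p]) • z (n + 1) - z n : K) := by
    intro n
    have hmem : (p : ℤ_[p]) • z (n + 1) - z n
        ∈ Submodule.comap K.subtype (LinearMap.range f) := by
      rw [← Submodule.Quotient.mk_eq_zero]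
      have hmk : (Submodule.Quotient.mk ((p : ℤ_[p]) • z (n + 1) - z n) :
            K ⧸ Submodule.comap K.subtype (LinearMap.range f))
          = (p : ℤ_[p]) • Submodule.Quotient.mk (z (n + 1))
            - Submodule.Quotient.mk (z n) := by
        simp
      rw [hmk, hz, hz, ← map_smul, hdiv, sub_self]
    exact hmem
  choose y hy using hchain
  -- partial sums
  set w : ℕ → A := fun n => ∑ k ∈ Finset.range n, (p : ℤ_[p]) ^ k • y k with hw
  have hw0 : w 0 = 0 := Finset.sum_range_zero _
  have hwsucc : ∀ n : ℕ, w (n + 1) = w n + (p : ℤ_[p]) ^ n • y n :=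
    fun n => Finset.sum_range_succ _ _
  have hwsub : ∀ m n : ℕ, m ≤ n → ∃ v, (p : ℤ_[p]) ^ m • v = w n - w m := by
    intro m n hmn
    induction n, hmn using Nat.le_induction with
    | base => exact ⟨0, by simp⟩
    | succ n hmn ih =>
      obtain ⟨v, hv⟩ := ih
      refine ⟨v + (p : ℤ_[p]) ^ (n - m) • y n, ?_⟩
      have hpow : (p : ℤ_[p]) ^ m * (p : ℤ_[p]) ^ (n - m) = (p : ℤ_[p]) ^ n := by
        rw [← pow_add, Nat.add_sub_cancel' hmn]
      rw [smul_add, hv, smul_smul, hpow, hwsucc]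
      abel
  -- w is Cauchy; get a limit L by completeness of A
  have hprec : ∀ {m n : ℕ}, m ≤ n →
      w m ≡ w n [SMOD ((Ideal.span {(p : ℤ_[p])}) ^ m • ⊤ : Submodule ℤ_[p] A)] := by
    intro m n hmn
    rw [SModEq.sub_mem]
    obtain ⟨v, hv⟩ := hwsub m n hmn
    exact (mem_pow_span_smul_top_iff _ _ _).mpr ⟨-v, by rw [smul_neg, hv]; abel⟩
  obtain ⟨L, hL⟩ := hA.toIsPrecomplete.prec hprec
  -- key identity: z 0 + f (w n) = p^n • z n  (in B)
  have hkey : ∀ n : ℕ, ((z 0 : K) : B) + f (w n) = (p : ℤ_[p]) ^ n • ((z n : K) : B) := by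
    intro n
    induction n with
    | zero => simp [hw0]
    | succ n ih =>
      have hyn : f (y n) = (p : ℤ_[p]) • ((z (n + 1) : K) : B) - ((z n : K) : B) := by
        rw [hy n]; simp
      rw [hwsucc, map_add, ← add_assoc, ih, map_smul, hyn]
      rw [smul_sub, smul_smul, ← pow_succ]
      abel
  -- the element x = z 0 + f L is infinitely p-divisible in B
  set x : B := ((z 0 : K) : B) + f L with hx
  have hxdiv : ∀ n : ℕ,
      x ∈ ((Ideal.span {(p : ℤ_[p])}) ^ n • ⊤ : Submodule ℤ_[p] B) := by
    intro n
    have hn := hL n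
    rw [SModEq.sub_mem] at hn
    obtain ⟨v, hv⟩ := (mem_pow_span_smul_top_iff _ _ _).mp hn
    refine (mem_pow_span_smul_top_iff _ _ _).mpr ⟨((z n : K) : B) - f v, ?_⟩
    have hxeq : x = (p : ℤ_[p]) ^ n • ((z n : K) : B) - f (w n - L) := by
      rw [map_sub, ← hkey n, hx]; abel
    rw [smul_sub, ← map_smul, hv, hxeq]
  have hx0 : x = 0 := by
    refine hB.toIsHausdorff.haus x fun n => ?_
    rw [SModEq.zero]
    exact hxdiv n
  -- hence z 0 ∈ the comap submodule, so φ q = 0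
  have hz0 : z 0 ∈ Submodule.comap K.subtype (LinearMap.range f) := by
    show ((z 0 : K) : B) ∈ LinearMap.range f
    refine ⟨-L, ?_⟩
    rw [map_neg]
    rw [hx] at hx0
    exact neg_eq_of_add_eq_zero_left hx0
  have hfin : φ (q / (p : ℚ_[p]) ^ 0) = 0 := by
    rw [← hz 0, Submodule.Quotient.mk_eq_zero]
    exact hz0
  simpa using hfin

/-- Let `M^•` be a bounded-above cochain complex of `p`-adically complete,
`p`-torsion-free `ℤ_p`-modules.  Then for each `i`, the cohomology group
`H^i(M^•) = ker(d : M^i → M^{i+1}) / im(d : M^{i-1} → M^i)` satisfies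
`Hom_{ℤ_p}(ℚ_p, H^i(M^•)) = 0`.  (Here the cohomology at spot `i+1` is realized as the
quotient of `ker (d (i+1))` by the preimage of `range (d i)`, which covers every spot as `i`
ranges over `ℤ`.) -/
theorem stmt2 (p : ℕ) [Fact p.Prime]
    (M : ℤ → Type*) [∀ j, AddCommGroup (M j)] [∀ j, Module ℤ_[p] (M j)]
    (d : ∀ j : ℤ, M j →ₗ[ℤ_[p]] M (j + 1))
    (hdd : ∀ j : ℤ, (d (j + 1)).comp (d j) = 0)
    (N : ℤ) (hbdd : ∀ j : ℤ, N < j → Subsingleton (M j))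
    (hcompl : ∀ j : ℤ, IsAdicComplete (Ideal.span {(p : ℤ_[p])}) (M j))
    (htf : ∀ (j : ℤ) (x : M j), (p : ℤ_[p]) • x = 0 → x = 0)
    (i : ℤ)
    (φ : ℚ_[p] →ₗ[ℤ_[p]]
      (LinearMap.ker (d (i + 1)) ⧸
        Submodule.comap (LinearMap.ker (d (i + 1))).subtype (LinearMap.range (d i)))) :
    φ = 0 :=
  stmt2_aux p (M i) (M (i + 1)) (d i) (LinearMap.ker (d (i + 1)))
    (hcompl i) (hcompl (i + 1)) φ
end

section
/- With R = C⟨T^{±1/p^∞}⟩ and Γ ≅ Z_p acting by γ_a·T^{1/p^m} = ζ_{p^m}^a T^{1/p^m} for a ∈ Z_p (where (ζ_{p^m}) is a fixed compatible system of p-power roots of unity), let tr_m : R → R_m = C⟨T^{±1/p^m}⟩ be Tate's normalized trace. Then for any topological generator γ of p^m Γ, the operator γ - 1 is invertible on ker(tr_m), and the operator norm of its inverse equals |ζ_{p^{m+1}} - 1|^{-1} = p^{1/(p^m(p-1))}. -/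
open Filter

/-- The action of `γ - 1`, where `γ` is the topological generator of `p^m Γ` corresponding
to `u · p^m ∈ p^m ℤ_p`, on the coefficient of the monomial `T^q`:  on `T^{l/p^k}` (with
`gcd(l,p)=1`), `γ` acts by multiplication by `ζ_{p^k}^{l·u}` where `(ζ_{p^k})_k` is the
fixed compatible system of `p`-power roots of unity. -/
noncomputable def gammaEig (p : ℕ) [Fact p.Prime] {K : Type*} [NontriviallyNormedField K]
    (ζ : ℕ → K) (u : ℤ_[p]) (q : ℚ) : K :=
  ζ (padicValNat p q.den) ^
    ((PadicInt.toZModPow (padicValNat p q.den)) ((q.num : ℤ_[p]) * u)).val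

/-- An element of `ker(tr_m) ⊆ R = C⟨T^{±1/p^∞}⟩`, viewed as a function on the exponents:
supported on exponents `l/p^k` in lowest terms with `k > m`, bounded, and with coefficients
tending to `0`. -/
def memKerTrace (p m : ℕ) {K : Type*} [NontriviallyNormedField K] (f : ℚ → K) : Prop :=
  (∀ q : ℚ, f q ≠ 0 → ∃ k : ℕ, m < k ∧ q.den = p ^ k) ∧
  (∃ C : ℝ, ∀ q : ℚ, ‖f q‖ ≤ C) ∧
  Tendsto f cofinite (nhds 0)

section Aux

variable (p : ℕ) [Fact p.Prime] {K : Type*} [NontriviallyNormedField K]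

/-- Auxiliary: the norm of `gammaEig - 1` on a monomial of denominator `p^k`, `k ≥ 1`. -/
lemma gammaEig_norm_aux (ζ : ℕ → K)
    (hζnorm : ∀ (k : ℕ) (j : ℤ), 1 ≤ k → ¬ ((p : ℤ) ∣ j) →
      ‖ζ k ^ j - 1‖ = (p : ℝ) ^ (-((1 : ℝ) / ((p : ℝ) ^ (k - 1) * ((p : ℝ) - 1)))))
    (u : ℤ_[p]) (hu : ‖u‖ = 1) (q : ℚ) (k : ℕ) (hk : 1 ≤ k) (hden : q.den = p ^ k) :
    ‖gammaEig p ζ u q - 1‖ = (p : ℝ) ^ (-((1:ℝ) / ((p:ℝ) ^ (k-1) * ((p:ℝ) - 1)))) := by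
  have hp := (Fact.out : p.Prime)
  have hval : padicValNat p q.den = k := by rw [hden, padicValNat.prime_pow]
  have hpnum : ¬ (p:ℤ) ∣ q.num := by
    intro h
    have h1 : p ∣ q.num.natAbs := Int.natCast_dvd.mp h
    have h2 : p ∣ q.den := hden ▸ dvd_pow_self p (by omega)
    have := Nat.dvd_gcd h1 h2
    rw [q.reduced] at this
    exact hp.one_lt.ne' (Nat.dvd_one.mp this)
  have hnormnum : ‖((q.num : ℤ_[p]))‖ = 1 := by
    refine le_antisymm (PadicInt.norm_le_one _) (le_of_not_gt fun h => ?_)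
    exact hpnum ((PadicInt.norm_int_lt_one_iff_dvd _).mp h)
  have hxunit : IsUnit ((q.num : ℤ_[p]) * u) := by
    rw [PadicInt.isUnit_iff, norm_mul, hnormnum, hu, mul_one]
  have hyunit : IsUnit ((PadicInt.toZModPow (p := p) k) ((q.num : ℤ_[p]) * u)) :=
    hxunit.map _
  set j : ℕ := ((PadicInt.toZModPow (p := p) k) ((q.num : ℤ_[p]) * u)).val with hj
  have hcop : Nat.Coprime j (p ^ k) := by
    have := ZMod.val_coe_unit_coprime hyunit.unit
    rwa [hyunit.unit_spec] at this
  have hpj : ¬ (p:ℤ) ∣ (j : ℤ) := by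
    rw [Int.natCast_dvd_natCast]
    intro h
    have h2 : p ∣ p ^ k := dvd_pow_self p (by omega)
    have := Nat.dvd_gcd h h2
    rw [hcop] at this
    exact hp.one_lt.ne' (Nat.dvd_one.mp this)
  have h2 := hζnorm k (j : ℤ) hk hpj
  rw [zpow_natCast] at h2
  show ‖ζ (padicValNat p q.den) ^
    ((PadicInt.toZModPow (padicValNat p q.den)) ((q.num : ℤ_[p]) * u)).val - 1‖ = _
  rw [show padicValNat p q.den = k from hval]
  exact h2

/-- Auxiliary: monotonicity of `p ^ (-(1/(p^a (p-1))))` in `a`. -/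
lemma rpow_mono_aux (a b : ℕ) (h : a ≤ b) :
    (p:ℝ) ^ (-((1:ℝ)/((p:ℝ)^a*((p:ℝ)-1)))) ≤ (p:ℝ) ^ (-((1:ℝ)/((p:ℝ)^b*((p:ℝ)-1)))) := by
  have hp : (1:ℝ) < (p:ℝ) := by exact_mod_cast (Fact.out : p.Prime).one_lt
  apply Real.rpow_le_rpow_of_exponent_le hp.le
  rw [neg_le_neg_iff]
  have hpa : (0:ℝ) < (p:ℝ)^a * ((p:ℝ)-1) := by
    have := pow_pos (by linarith : (0:ℝ) < (p:ℝ)) a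
    nlinarith
  apply one_div_le_one_div_of_le hpa
  have : (p:ℝ)^a ≤ (p:ℝ)^b := pow_le_pow_right₀ hp.le h
  nlinarith

end Aux

/-- With `R = C⟨T^{±1/p^∞}⟩` and `Γ ≅ ℤ_p` acting through the compatible
system `(ζ_{p^k})` of `p`-power roots of unity, let `tr_m : R → R_m` be Tate's normalized
trace.  Then for any topological generator `γ` of `p^m Γ` (corresponding to `u·p^m` with
`u ∈ ℤ_p^×`), the operator `γ - 1` is invertible on `ker(tr_m)`, and the operator norm of
its inverse equals `|ζ_{p^{m+1}} - 1|⁻¹ = p^{1/(p^m (p-1))}`. -/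
theorem stmt7 (p : ℕ) [Fact p.Prime]
    (K : Type*) [NontriviallyNormedField K]
    (ζ : ℕ → K)
    (hζ0 : ζ 0 = 1)
    (hζcompat : ∀ k : ℕ, ζ (k + 1) ^ p = ζ k)
    (hζ1 : ζ 1 ≠ 1)
    (hζnorm : ∀ (k : ℕ) (j : ℤ), 1 ≤ k → ¬ ((p : ℤ) ∣ j) →
      ‖ζ k ^ j - 1‖ = (p : ℝ) ^ (-((1 : ℝ) / ((p : ℝ) ^ (k - 1) * ((p : ℝ) - 1)))))
    (m : ℕ) (u : ℤ_[p]) (hu : ‖u‖ = 1) :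
    -- `γ - 1` preserves `ker(tr_m)` …
    (∀ f : ℚ → K, memKerTrace p m f →
      memKerTrace p m (fun q => gammaEig p ζ u q * f q - f q)) ∧
    -- … and is bijective on it,
    (∀ g : ℚ → K, memKerTrace p m g →
      ∃! f : ℚ → K, memKerTrace p m f ∧ (fun q => gammaEig p ζ u q * f q - f q) = g) ∧
    -- the inverse has operator norm at most `p^{1/(p^m(p-1))}` …
    (∀ g f : ℚ → K, memKerTrace p m g → memKerTrace p m f →
      (fun q => gammaEig p ζ u q * f q - f q) = g →
      (⨆ q : ℚ, ‖f q‖) ≤ (p : ℝ) ^ ((1 : ℝ) / ((p : ℝ) ^ m * ((p : ℝ) - 1))) * ⨆ q : ℚ, ‖g q‖) ∧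
    -- … and this constant is optimal: the operator norm equals `p^{1/(p^m(p-1))}` …
    (∀ C' : ℝ, 0 ≤ C' →
      (∀ g f : ℚ → K, memKerTrace p m g → memKerTrace p m f →
        (fun q => gammaEig p ζ u q * f q - f q) = g →
        (⨆ q : ℚ, ‖f q‖) ≤ C' * ⨆ q : ℚ, ‖g q‖) →
      (p : ℝ) ^ ((1 : ℝ) / ((p : ℝ) ^ m * ((p : ℝ) - 1))) ≤ C') ∧
    -- … which is `|ζ_{p^{m+1}} - 1|⁻¹`.
    (p : ℝ) ^ ((1 : ℝ) / ((p : ℝ) ^ m * ((p : ℝ) - 1))) = ‖ζ (m + 1) - 1‖⁻¹ := by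
  classical
  have hp := (Fact.out : p.Prime)
  have hp1 : (1:ℝ) < (p:ℝ) := by exact_mod_cast hp.one_lt
  set r : ℝ := (1 : ℝ) / ((p : ℝ) ^ m * ((p : ℝ) - 1)) with hr
  set B : ℝ := (p : ℝ) ^ r with hB
  set E : ℝ := (p : ℝ) ^ (-r) with hE
  have hEpos : 0 < E := Real.rpow_pos_of_pos (by linarith) _
  have hBpos : 0 < B := Real.rpow_pos_of_pos (by linarith) _
  have hBE : B * E = 1 := by
    rw [hB, hE, ← Real.rpow_add (by linarith)]
    simp
  have hBinv : B = E⁻¹ := by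
    field_simp
    linarith [hBE]
  -- the norm of the eigenvalue minus 1 at level k, and its lower bound E
  have hEq : ∀ (q : ℚ) (k : ℕ), m < k → q.den = p ^ k →
      E ≤ ‖gammaEig p ζ u q - 1‖ ∧ ‖gammaEig p ζ u q - 1‖ ≤ 1 := by
    intro q k hk hden
    have h1 := gammaEig_norm_aux p ζ hζnorm u hu q k (by omega) hden
    rw [h1]
    constructor
    · exact rpow_mono_aux p m (k-1) (by omega)
    · apply Real.rpow_le_one_of_one_le_of_nonpos hp1.le
      have : (0:ℝ) < (p:ℝ)^(k-1) * ((p:ℝ)-1) := by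
        have := pow_pos (by linarith : (0:ℝ) < (p:ℝ)) (k-1)
        nlinarith
      have := one_div_pos.mpr this
      linarith
  -- pointwise norm bound for the "inverse"
  have hpt : ∀ f : ℚ → K, memKerTrace p m f → ∀ q : ℚ,
      ‖f q‖ ≤ B * ‖gammaEig p ζ u q * f q - f q‖ := by
    intro f hf q
    by_cases hfq : f q = 0
    · simp [hfq]
    · obtain ⟨k, hk, hden⟩ := hf.1 q hfq
      obtain ⟨hE1, -⟩ := hEq q k hk hden
      have h1 : gammaEig p ζ u q * f q - f q = (gammaEig p ζ u q - 1) * f q := by ring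
      rw [h1, norm_mul]
      have hfn := norm_nonneg (f q)
      nlinarith [mul_nonneg (mul_nonneg hBpos.le (sub_nonneg.mpr hE1)) hfn]
  -- pointwise norm bound for the image
  have hptim : ∀ f : ℚ → K, memKerTrace p m f → ∀ q : ℚ,
      ‖gammaEig p ζ u q * f q - f q‖ ≤ ‖f q‖ := by
    intro f hf q
    by_cases hfq : f q = 0
    · simp [hfq]
    · obtain ⟨k, hk, hden⟩ := hf.1 q hfq
      obtain ⟨-, hE2⟩ := hEq q k hk hden
      have h1 : gammaEig p ζ u q * f q - f q = (gammaEig p ζ u q - 1) * f q := by ring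
      rw [h1, norm_mul]
      exact mul_le_of_le_one_left (norm_nonneg _) hE2
  -- part 1: preservation
  have part1 : ∀ f : ℚ → K, memKerTrace p m f →
      memKerTrace p m (fun q => gammaEig p ζ u q * f q - f q) := by
    intro f hf
    refine ⟨?_, ?_, ?_⟩
    · intro q hq
      apply hf.1 q
      intro hfq
      exact hq (by simp [hfq])
    · obtain ⟨C, hC⟩ := hf.2.1
      exact ⟨C, fun q => (hptim f hf q).trans (hC q)⟩
    · exact squeeze_zero_norm (hptim f hf) (tendsto_zero_iff_norm_tendsto_zero.mp hf.2.2)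
  refine ⟨part1, ?_, ?_, ?_, ?_⟩
  · -- part 2: bijectivity
    intro g hg
    set F : ℚ → K := fun q =>
      if g q = 0 then 0 else (gammaEig p ζ u q - 1)⁻¹ * g q with hF
    have hne : ∀ q : ℚ, g q ≠ 0 → gammaEig p ζ u q - 1 ≠ 0 := by
      intro q hgq
      obtain ⟨k, hk, hden⟩ := hg.1 q hgq
      obtain ⟨hE1, -⟩ := hEq q k hk hden
      intro h0
      rw [h0, norm_zero] at hE1
      linarith
    have hrel : ∀ q : ℚ, gammaEig p ζ u q * F q - F q = g q := by
      intro q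
      by_cases hgq : g q = 0
      · simp [hF, hgq]
      · simp only [hF, if_neg hgq]
        have := hne q hgq
        field_simp
    have hFle : ∀ q : ℚ, ‖F q‖ ≤ B * ‖g q‖ := by
      intro q
      by_cases hgq : g q = 0
      · have : F q = 0 := by simp [hF, hgq]
        rw [this, hgq]
        simp
      · have h1 : ‖F q‖ ≤ B * ‖gammaEig p ζ u q * F q - F q‖ := by
          by_cases hFq : F q = 0
          · simp [hFq]
          · obtain ⟨k, hk, hden⟩ := hg.1 q hgq
            obtain ⟨hE1, -⟩ := hEq q k hk hden
            have h2 : gammaEig p ζ u q * F q - F q = (gammaEig p ζ u q - 1) * F q := by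
              ring
            rw [h2, norm_mul]
            have hfn := norm_nonneg (F q)
            nlinarith [mul_nonneg (mul_nonneg hBpos.le (sub_nonneg.mpr hE1)) hfn]
        rwa [hrel q] at h1
    have hFker : memKerTrace p m F := by
      refine ⟨?_, ?_, ?_⟩
      · intro q hq
        apply hg.1 q
        intro hgq
        exact hq (by simp [hF, hgq])
      · obtain ⟨C, hC⟩ := hg.2.1
        refine ⟨B * C, fun q => (hFle q).trans ?_⟩
        have : (0:ℝ) ≤ ‖g q‖ := norm_nonneg _
        nlinarith [hC q]
      · apply squeeze_zero_norm hFle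
        have := (tendsto_zero_iff_norm_tendsto_zero.mp hg.2.2).const_mul B
        simpa using this
    refine ⟨F, ⟨hFker, funext hrel⟩, ?_⟩
    rintro f' ⟨hf', heq'⟩
    funext q
    by_contra hneq
    have h0 : (gammaEig p ζ u q - 1) * (f' q - F q) = 0 := by
      have e1 : gammaEig p ζ u q * f' q - f' q = g q := congrFun heq' q
      have e2 := hrel q
      linear_combination e1 - e2
    have hsub : f' q - F q ≠ 0 := sub_ne_zero.mpr hneq
    have hlam : gammaEig p ζ u q - 1 = 0 := by
      rcases mul_eq_zero.mp h0 with h | h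
      · exact h
      · exact absurd h hsub
    -- q must be in the support of f' or F, hence den = p^k with k > m
    have hsupp : ∃ k : ℕ, m < k ∧ q.den = p ^ k := by
      by_cases hf'q : f' q = 0
      · have hFq : F q ≠ 0 := fun h => hneq (h ▸ hf'q)
        exact hFker.1 q hFq
      · exact hf'.1 q hf'q
    obtain ⟨k, hk, hden⟩ := hsupp
    obtain ⟨hE1, -⟩ := hEq q k hk hden
    rw [hlam, norm_zero] at hE1
    linarith
  · -- part 3: norm bound
    intro g f hg hf heq
    have hbddg : BddAbove (Set.range fun q : ℚ => ‖g q‖) := by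
      obtain ⟨C, hC⟩ := hg.2.1
      exact ⟨C, by rintro x ⟨q, rfl⟩; exact hC q⟩
    apply ciSup_le
    intro q
    have h1 := hpt f hf q
    rw [show gammaEig p ζ u q * f q - f q = g q from congrFun heq q] at h1
    refine h1.trans ?_
    have := le_ciSup hbddg q
    nlinarith
  · -- part 4: optimality
    intro C' hC'0 hC'
    have hden0 : p ^ (m+1) ≠ 0 := pow_ne_zero _ hp.ne_zero
    set q0 : ℚ := ⟨1, p ^ (m+1), hden0, by simp⟩ with hq0
    have hq0den : q0.den = p ^ (m+1) := rfl
    set f0 : ℚ → K := fun q => if q = q0 then (1:K) else 0 with hf0def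
    have hf0 : memKerTrace p m f0 := by
      refine ⟨?_, ⟨1, ?_⟩, ?_⟩
      · intro q hq
        by_cases h : q = q0
        · exact ⟨m+1, by omega, by rw [h, hq0den]⟩
        · exact absurd (by simp [hf0def, h]) hq
      · intro q
        by_cases h : q = q0 <;> simp [hf0def, h]
      · apply Tendsto.congr' (f₁ := fun _ => (0:K)) _ tendsto_const_nhds
        rw [Filter.eventuallyEq_iff_exists_mem]
        refine ⟨{q | q ≠ q0}, ?_, fun q hq => by
          show (0:K) = if q = q0 then 1 else 0
          exact (if_neg hq).symm⟩
        rw [mem_cofinite]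
        simpa using Set.finite_singleton q0
    set g0 : ℚ → K := fun q => gammaEig p ζ u q * f0 q - f0 q with hg0def
    have hg0 : memKerTrace p m g0 := part1 f0 hf0
    have hineq := hC' g0 f0 hg0 hf0 rfl
    have hE0 : ‖gammaEig p ζ u q0 - 1‖ = E := by
      have h := gammaEig_norm_aux p ζ hζnorm u hu q0 (m+1) (by omega) hq0den
      rw [hE, hr]
      rwa [show (m+1) - 1 = m from rfl] at h
    have hsupf : (⨆ q : ℚ, ‖f0 q‖) = 1 := by
      have hbdd : BddAbove (Set.range fun q : ℚ => ‖f0 q‖) := by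
        refine ⟨1, ?_⟩
        rintro x ⟨q, rfl⟩
        by_cases h : q = q0 <;> simp [hf0def, h]
      apply le_antisymm
      · apply ciSup_le
        intro q
        by_cases h : q = q0 <;> simp [hf0def, h]
      · have := le_ciSup hbdd q0
        simpa [hf0def] using this
    have hsupg : (⨆ q : ℚ, ‖g0 q‖) = E := by
      have hval : ∀ q : ℚ, ‖g0 q‖ = if q = q0 then E else 0 := by
        intro q
        by_cases h : q = q0
        · rw [if_pos h]
          show ‖gammaEig p ζ u q * f0 q - f0 q‖ = E
          rw [h]
          have hf01 : f0 q0 = 1 := if_pos rfl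
          rw [hf01, mul_one]
          exact hE0
        · have hf00 : f0 q = 0 := if_neg h
          show ‖gammaEig p ζ u q * f0 q - f0 q‖ = _
          rw [hf00, if_neg h]
          simp
      have hbdd : BddAbove (Set.range fun q : ℚ => ‖g0 q‖) := by
        refine ⟨E, ?_⟩
        rintro x ⟨q, rfl⟩
        show ‖g0 q‖ ≤ E
        rw [hval q]
        by_cases h : q = q0 <;> simp [h, hEpos.le]
      apply le_antisymm
      · apply ciSup_le
        intro q
        show ‖g0 q‖ ≤ E
        rw [hval q]
        by_cases h : q = q0 <;> simp [h, hEpos.le]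
      · have h2 : E = ‖g0 q0‖ := by rw [hval q0, if_pos rfl]
        rw [h2]
        exact le_ciSup hbdd q0
    rw [hsupf, hsupg] at hineq
    rw [hBinv]
    rw [show E⁻¹ = 1 / E by ring]
    exact (div_le_iff₀ hEpos).mpr hineq
  · -- part 5: the constant is |ζ_{p^{m+1}} - 1|⁻¹
    have h1 := hζnorm (m+1) 1 (by omega) ?_
    · rw [zpow_one] at h1
      rw [show (m+1) - 1 = m from rfl] at h1
      rw [h1, hBinv, hE, hr]
    · intro hdvd
      have : (p:ℤ) ≤ 1 := Int.le_of_dvd one_pos hdvd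
      have h2 : (2:ℤ) ≤ (p:ℤ) := by exact_mod_cast hp.two_le
      omega
end
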